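/- Let β : ℤ^(d+1) → ℤ^d be the homomorphism given by β(e₀) = -m₀·(a₁,…,a_d) and β(e_j) = m_j·ε_j for j = 1,…,d, where ε_j are the standard basis vectors, the m_i are positive integers, and (a₁,…,a_d) is a vector of positive integers. Then the cokernel of β is isomorphic to the quotient of ⨁_{i=0}^{d} ℤ/m_iℤ by the cyclic subgroup generated by (1 mod m₀, a₁ mod m₁, …, a_d mod m_d). -/

import Mathlib

set_option maxHeartbeats 1000000


open Matrix

/-- The homomorphism `β : ℤ^(d+1) → ℤ^d` of a labelled sheared simplex, as a matrix:
`β(e₀) = -m₀·(a₁,…,a_d)` and `β(e_j) = m_j·ε_j` for `j = 1,…,d`. -/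
def shearedMatrix (d : ℕ) (m : Fin (d + 1) → ℕ) (a : Fin d → ℕ) :
    Matrix (Fin d) (Fin (d + 1)) ℤ :=
  fun i j => if j = 0 then -((m 0 : ℤ) * (a i : ℤ)) else if j = i.succ then (m j : ℤ) else 0

/-- The element `(1 mod m₀, a₁ mod m₁, …, a_d mod m_d)` of `⨁ ℤ/m_iℤ`. -/
def shearedGen (d : ℕ) (m : Fin (d + 1) → ℕ) (a : Fin d → ℕ) :
    ∀ j : Fin (d + 1), ZMod (m j) :=
  fun j => Fin.cases (motive := fun j => ZMod (m j)) (1 : ZMod (m 0))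
    (fun i => (a i : ZMod (m i.succ))) j

theorem sheared_mulVec (d : ℕ) (m : Fin (d + 1) → ℕ) (a : Fin d → ℕ)
    (c : Fin (d + 1) → ℤ) (i : Fin d) :
    (shearedMatrix d m a).mulVec c i
      = -((m 0 : ℤ) * a i) * c 0 + (m i.succ : ℤ) * c i.succ := by
  rw [mulVec_apply_eq_sum]
  unfold shearedMatrix
  rw [Fin.sum_univ_succ]
  simp only [if_pos rfl]
  congr 1
  rw [Finset.sum_eq_single i]
  · simp [Fin.succ_ne_zero]
  · intro b _ hb
    simp [Fin.succ_injective d |>.ne_iff.2 hb, (Fin.succ_ne_zero b)]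
  · simp

/-- The cokernel of the homomorphism of a labelled sheared simplex is isomorphic to the
quotient of `⨁_{i=0}^d ℤ/m_iℤ` by the cyclic subgroup generated by
`(1 mod m₀, a₁ mod m₁, …, a_d mod m_d)`. -/
theorem stmt_4 (d : ℕ) (m : Fin (d + 1) → ℕ) (a : Fin d → ℕ)
    (hm : ∀ i, 0 < m i) (ha : ∀ i, 0 < a i) :
    Nonempty (((Fin d → ℤ) ⧸ LinearMap.range (Matrix.toLin' (shearedMatrix d m a)))
      ≃+ ((∀ j : Fin (d + 1), ZMod (m j)) ⧸ AddSubgroup.closure {shearedGen d m a})) := by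
  classical
  haveI : ∀ j, NeZero (m j) := fun j => ⟨(hm j).ne'⟩
  set g := shearedGen d m a with hgdef
  have hg0 : g 0 = 1 := rfl
  have hgs : ∀ i : Fin d, g i.succ = (a i : ZMod (m i.succ)) := fun i => by
    simp [hgdef, shearedGen]
  -- the map ℤ^d → ∏ ZMod (m j) sending x to (0, x₁ mod m₁, …)
  let F : (Fin d → ℤ) →+ (∀ j : Fin (d + 1), ZMod (m j)) :=
    { toFun := fun x j => Fin.cases (motive := fun j => ZMod (m j)) (0 : ZMod (m 0))
        (fun i => ((x i : ℤ) : ZMod (m i.succ))) j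
      map_zero' := by
        funext j
        induction j using Fin.cases <;> simp
      map_add' := by
        intro x y
        funext j
        induction j using Fin.cases <;> simp }
  have hF0 : ∀ x, F x 0 = 0 := fun x => rfl
  have hFs : ∀ x (i : Fin d), F x i.succ = ((x i : ℤ) : ZMod (m i.succ)) := fun x i => by
    simp [F]
  let φ : (Fin d → ℤ) →+ ((∀ j : Fin (d + 1), ZMod (m j)) ⧸ AddSubgroup.closure {g}) :=
    (QuotientAddGroup.mk' (AddSubgroup.closure {g})).comp F
  have hsurj : Function.Surjective φ := by
    intro q
    obtain ⟨p, rfl⟩ := QuotientAddGroup.mk'_surjective _ q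
    set n : ℤ := ((p 0).val : ℤ) with hn
    refine ⟨fun i => ((p i.succ - n • (a i : ZMod (m i.succ))).val : ℤ), ?_⟩
    have : F (fun i => ((p i.succ - n • (a i : ZMod (m i.succ))).val : ℤ)) = p - n • g := by
      funext j
      induction j using Fin.cases with
      | zero =>
        rw [hF0]
        have : (n : ZMod (m 0)) = p 0 := by
          simp [hn, ZMod.intCast_cast, ZMod.natCast_val, ZMod.cast_id]
        simp [hg0, this]
      | succ i =>
        rw [hFs]
        simp [hgs, ZMod.intCast_cast, ZMod.natCast_val, ZMod.cast_id]
    have hmem : n • g ∈ AddSubgroup.closure {g} :=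
      AddSubgroup.zsmul_mem _ (AddSubgroup.subset_closure (Set.mem_singleton g)) n
    calc φ (fun i => ((p i.succ - n • (a i : ZMod (m i.succ))).val : ℤ))
        = QuotientAddGroup.mk' (AddSubgroup.closure {g}) (p - n • g) := by
          show QuotientAddGroup.mk' (AddSubgroup.closure {g})
            (F fun i => ((p i.succ - n • (a i : ZMod (m i.succ))).val : ℤ)) = _
          rw [this]
      _ = QuotientAddGroup.mk' (AddSubgroup.closure {g}) p := by
          rw [QuotientAddGroup.mk'_eq_mk']
          exact ⟨n • g, hmem, by abel⟩
  have hker : φ.ker = (LinearMap.range (Matrix.toLin' (shearedMatrix d m a))).toAddSubgroup := by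
    ext x
    simp only [AddMonoidHom.mem_ker, Submodule.mem_toAddSubgroup, LinearMap.mem_range]
    constructor
    · intro hx
      have hx' : F x ∈ AddSubgroup.closure {g} := by
        have hx2 : QuotientAddGroup.mk' (AddSubgroup.closure {g}) (F x) = 0 := hx
        rwa [QuotientAddGroup.mk'_apply, QuotientAddGroup.eq_zero_iff (F x)] at hx2
      rw [AddSubgroup.mem_closure_singleton] at hx'
      obtain ⟨n, hn⟩ := hx'
      -- component 0 : n ≡ 0 mod m 0
      have h0 : ((m 0 : ℤ)) ∣ n := by
        have := congrFun hn 0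
        rw [hF0] at this
        have : (n : ZMod (m 0)) = 0 := by
          simpa [hg0, zsmul_eq_mul] using this
        exact (ZMod.intCast_zmod_eq_zero_iff_dvd n (m 0)).1 this
      obtain ⟨s, hs⟩ := h0
      -- components i.succ
      have hsucc : ∀ i : Fin d, ((m i.succ : ℤ)) ∣ x i - n * a i := by
        intro i
        have h1 : ((x i : ℤ) : ZMod (m i.succ))
            = (n : ZMod (m i.succ)) * ((a i : ℤ) : ZMod (m i.succ)) := by
          rw [← hFs x i, ← hn, Pi.smul_apply, hgs, zsmul_eq_mul]
          push_cast
          ring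
        have h2 : ((x i - n * a i : ℤ) : ZMod (m i.succ)) = 0 := by
          push_cast [h1] at *
          rw [h1]
          push_cast
          ring
        exact (ZMod.intCast_zmod_eq_zero_iff_dvd _ _).1 h2
      choose t ht using hsucc
      refine ⟨Fin.cases (-s) t, ?_⟩
      funext i
      rw [Matrix.toLin'_apply, sheared_mulVec]
      simp only [Fin.cases_zero, Fin.cases_succ]
      rw [← ht i, hs]
      ring
    · rintro ⟨c, rfl⟩
      have hFx : F (Matrix.toLin' (shearedMatrix d m a) c) = (-((m 0 : ℤ) * c 0)) • g := by
        funext j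
        induction j using Fin.cases with
        | zero =>
          rw [hF0, Pi.smul_apply, hg0, zsmul_eq_mul, mul_one]
          exact ((ZMod.intCast_zmod_eq_zero_iff_dvd _ _).2 ⟨-(c 0), by ring⟩).symm
        | succ i =>
          rw [hFs, Matrix.toLin'_apply, sheared_mulVec, Pi.smul_apply, hgs, zsmul_eq_mul]
          push_cast
          simp only [ZMod.natCast_self, zero_mul]
          ring
      show QuotientAddGroup.mk' (AddSubgroup.closure {g}) (F (Matrix.toLin' (shearedMatrix d m a) c)) = 0
      rw [QuotientAddGroup.mk'_apply, QuotientAddGroup.eq_zero_iff, hFx]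
      exact AddSubgroup.zsmul_mem _ (AddSubgroup.subset_closure (Set.mem_singleton g)) _
  refine ⟨?_⟩
  exact (QuotientAddGroup.quotientAddEquivOfEq hker.symm).trans
    (QuotientAddGroup.quotientKerEquivOfSurjective φ hsurj)
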